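/- Let τ > 0. Let (λ, ν) be an eigenpair of A with λ ≠ 0, ν entrywise nonnegative and nonzero, and ν not a constant vector (there exist indices i, j with ν_i ≠ ν_j). Then ν is not an eigenvector of (I_n − τ·1·1ᵀ/n)·A: for every λ̂ ∈ ℝ, (I_n − τ·1·1ᵀ/n)·A·ν ≠ λ̂·ν. -/
import Mathlib


open Matrix

/-- Let `A` be symmetric nonnegative and `τ > 0`. If `(λ, ν)` is an
eigenpair of `A` with `λ ≠ 0`, `ν` entrywise nonnegative, nonzero and non-constant, then `ν`
is not an eigenvector of the centered operator `(I − τ·11ᵀ/n)·A`. -/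
theorem stmt_15 {n : ℕ}
    (A : Matrix (Fin n) (Fin n) ℝ) (hA : A.IsSymm) (hAnn : ∀ i j, 0 ≤ A i j)
    (τ : ℝ) (hτ : 0 < τ)
    (lam : ℝ) (hlam : lam ≠ 0)
    (ν : Fin n → ℝ)
    (heig : A *ᵥ ν = lam • ν)
    (hν_nonneg : ∀ i, 0 ≤ ν i) (hν_ne : ν ≠ 0)
    (hν_nonconst : ∃ i j : Fin n, ν i ≠ ν j) :
    ∀ lamHat : ℝ,
      (((1 : Matrix (Fin n) (Fin n) ℝ) - (τ / n) • Matrix.of fun _ _ => (1 : ℝ)) * A) *ᵥ ν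
        ≠ lamHat • ν := by
  intro lamHat h
  obtain ⟨i, j, hij⟩ := hν_nonconst
  have hn : (0:ℝ) < n := by
    have : 0 < n := Fin.pos i
    exact_mod_cast this
  set s : ℝ := ∑ k, ν k with hs
  -- entrywise equation
  have key : ∀ k : Fin n, lam * ν k - (τ / n) * (lam * s) = lamHat * ν k := by
    intro k
    have h1 : ((((1 : Matrix (Fin n) (Fin n) ℝ)
        - (τ / n) • Matrix.of fun _ _ => (1 : ℝ)) * A) *ᵥ ν) k = lamHat * ν k := by
      rw [h]; rfl
    rw [← Matrix.mulVec_mulVec, heig] at h1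
    simp only [Matrix.sub_mulVec, Matrix.one_mulVec, Matrix.smul_mulVec,
      Matrix.mulVec_smul, Pi.sub_apply, Pi.smul_apply, smul_eq_mul] at h1
    have h2 : ((Matrix.of fun _ _ => (1:ℝ)) *ᵥ ν) k = s := by
      simp [Matrix.mulVec, dotProduct, hs]
    rw [h2] at h1
    linarith [h1]
  -- sum is positive
  have hspos : 0 < s := by
    obtain ⟨k, hk⟩ : ∃ k, ν k ≠ 0 := by
      by_contra hc
      push_neg at hc
      exact hν_ne (funext hc)
    have hk' : 0 < ν k := lt_of_le_of_ne (hν_nonneg k) (Ne.symm hk)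
    have : ν k ≤ s := Finset.single_le_sum (fun m _ => hν_nonneg m) (Finset.mem_univ k)
    linarith
  have hsub : (lam - lamHat) * (ν i - ν j) = 0 := by
    have hi := key i
    have hj := key j
    ring_nf
    ring_nf at hi hj
    linarith
  rcases mul_eq_zero.mp hsub with hl | hv
  · -- lam = lamHat, so (τ/n)*(lam*s) = 0
    have hll : lam = lamHat := by linarith
    have hi := key i
    have : (τ / n) * (lam * s) = 0 := by rw [hll]; rw [hll] at hi; linarith
    have hτn : τ / n ≠ 0 := ne_of_gt (div_pos hτ hn)
    have := mul_eq_zero.mp this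
    rcases this with h1 | h2
    · exact hτn h1
    · rcases mul_eq_zero.mp h2 with h3 | h4
      · exact hlam h3
      · linarith
  · exact hij (by linarith)
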